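/- Under the assumptions of the weighted-Lasso master lemma (penalty λ/n ≥ c‖S‖_∞ with score S based on ideal loadings, loadings satisfying ℓ̂υ̂⁰_j ≤ υ̂_j ≤ ûυ̂⁰_j with 1/c < ℓ̂ ≤ û), the prediction error obeys ‖β̂ − β₀‖_{2,n} ≤ (û + 1/c) · λ υ̂⁰_max √s / (n κ̂), where ‖δ‖_{2,n}² := (1/n)∑_{t=1}^n (x_tᵀδ)², s = |supp(β₀)|, υ̂⁰_max = max_j υ̂⁰_j, and κ̂² is the restricted eigenvalue of the empirical Gram matrix over the cone {δ : ‖δ_{T^c}‖₁ ≤ ĉ₀μ̂₀‖δ_T‖₁} with ĉ₀ = (ûc+1)/(ℓ̂c−1) and μ̂₀ = υ̂⁰_max/υ̂⁰_min, assuming κ̂ > 0. -/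

import Mathlib

set_option maxHeartbeats 1000000 in
/-- Prediction-error bound in the weighted-Lasso master lemma: under the
penalty-level condition `λ/n ≥ c‖S‖_∞` (score `S` based on ideal loadings
`υ0`), loadings satisfying `ℓ̂ υ0_j ≤ υ_j ≤ û υ0_j` with `1/c < ℓ̂ ≤ û`, and a
restricted-eigenvalue lower bound `κ > 0` over the cone with constant
`ĉ₀ μ̂₀` (with `ĉ₀ = (ûc+1)/(ℓ̂c−1)`, `μ̂₀ = max υ0 / min υ0`), one has
`‖β̂ − β₀‖_{2,n} ≤ (û + 1/c) λ υ0_max √s / (n κ)`, where `s = |supp β₀|`. -/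
theorem stmt_12 {n k : ℕ} (hn : 0 < n) [NeZero k]
    (x : Fin n → Fin k → ℝ) (y : Fin n → ℝ) (β₀ : Fin k → ℝ)
    (υ0 : Fin k → ℝ) (hυ0 : ∀ j, 0 < υ0 j)
    (c lhat uhat lam : ℝ) (hc : 1 < c)
    (hl : 1 / c < lhat) (hlu : lhat ≤ uhat)
    (hpen : ∀ j, c * |(2 / (n : ℝ)) *
        (∑ t, x t j * (y t - ∑ j', x t j' * β₀ j')) / υ0 j| ≤ lam / n)
    (υ : Fin k → ℝ)
    (hload : ∀ j, lhat * υ0 j ≤ υ j ∧ υ j ≤ uhat * υ0 j)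
    (βhat : Fin k → ℝ)
    (hmin : ∀ β : Fin k → ℝ,
      (1 / (n : ℝ)) * ∑ t, (y t - ∑ j, x t j * βhat j) ^ 2 +
          (lam / (n : ℝ)) * ∑ j, υ j * |βhat j| ≤
        (1 / (n : ℝ)) * ∑ t, (y t - ∑ j, x t j * β j) ^ 2 +
          (lam / (n : ℝ)) * ∑ j, υ j * |β j|)
    (κ : ℝ) (hκ : 0 < κ)
    -- restricted eigenvalue: κ² lower-bounds the empirical Gram quadratic form
    -- over the cone {δ : ‖δ_{T^c}‖₁ ≤ ĉ₀ μ̂₀ ‖δ_T‖₁}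
    (hRE : ∀ δ : Fin k → ℝ,
      (∑ j ∈ (Finset.univ.filter fun j => β₀ j ≠ 0)ᶜ, |δ j| ≤
        ((uhat * c + 1) / (lhat * c - 1)) * ((⨆ j, υ0 j) / (⨅ j, υ0 j)) *
          ∑ j ∈ Finset.univ.filter fun j => β₀ j ≠ 0, |δ j|) →
      κ ^ 2 * (∑ j, δ j ^ 2) ≤
        (1 / (n : ℝ)) * ∑ t, (∑ j, x t j * δ j) ^ 2) :
    Real.sqrt ((1 / (n : ℝ)) * ∑ t, (∑ j, x t j * (βhat j - β₀ j)) ^ 2) ≤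
      (uhat + 1 / c) * (lam * (⨆ j, υ0 j) *
        Real.sqrt ((Finset.univ.filter fun j => β₀ j ≠ 0).card)) / ((n : ℝ) * κ) := by
  classical
  have hk : 0 < k := Nat.pos_of_ne_zero (NeZero.ne k)
  haveI : Nonempty (Fin k) := Fin.pos_iff_nonempty.mp hk
  have hnpos : (0:ℝ) < n := by exact_mod_cast hn
  have hc0 : (0:ℝ) < c := lt_trans one_pos hc
  have hlpos : 0 < lhat := lt_trans (by positivity) hl
  have hupos : 0 < uhat := lt_of_lt_of_le hlpos hlu
  have hlam0 : 0 ≤ lam := by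
    have h := hpen ⟨0, hk⟩
    have h0 : (0:ℝ) ≤ lam / n := le_trans (by positivity) h
    rw [le_div_iff₀ hnpos] at h0; simpa using h0
  set T := Finset.univ.filter (fun j => β₀ j ≠ 0) with hTdef
  set M := ⨆ j, υ0 j with hMdef
  set m := ⨅ j, υ0 j with hmdef
  have hMle : ∀ j, υ0 j ≤ M := fun j => le_ciSup (Set.Finite.bddAbove (Set.finite_range υ0)) j
  have hmle : ∀ j, m ≤ υ0 j := fun j => ciInf_le (Set.Finite.bddBelow (Set.finite_range υ0)) j
  have hm0 : 0 < m := by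
    obtain ⟨j0, hj0⟩ := Finite.exists_min υ0
    exact lt_of_lt_of_le (hυ0 j0) (le_ciInf hj0)
  have hM0 : 0 < M := lt_of_lt_of_le (hυ0 ⟨0, hk⟩) (hMle _)
  set a := ∑ j ∈ T, υ0 j * |βhat j - β₀ j| with hadef
  set b := ∑ j ∈ Tᶜ, υ0 j * |βhat j - β₀ j| with hbdef
  set A := ∑ j ∈ T, |βhat j - β₀ j| with hAdef
  set B := ∑ j ∈ Tᶜ, |βhat j - β₀ j| with hBdef
  set Qn := (1 / (n:ℝ)) * ∑ t, (∑ j, x t j * (βhat j - β₀ j)) ^ 2 with hQdef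
  have ha0 : 0 ≤ a := Finset.sum_nonneg fun j _ => mul_nonneg (hυ0 j).le (abs_nonneg _)
  have hb0 : 0 ≤ b := Finset.sum_nonneg fun j _ => mul_nonneg (hυ0 j).le (abs_nonneg _)
  have hA0 : 0 ≤ A := Finset.sum_nonneg fun j _ => abs_nonneg _
  have hB0 : 0 ≤ B := Finset.sum_nonneg fun j _ => abs_nonneg _
  have hQ0 : 0 ≤ Qn := by
    rw [hQdef]; positivity
  have haA : a ≤ M * A := by
    rw [hadef, hAdef, Finset.mul_sum]
    exact Finset.sum_le_sum fun j _ => mul_le_mul_of_nonneg_right (hMle j) (abs_nonneg _)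
  have hbB : m * B ≤ b := by
    rw [hbdef, hBdef, Finset.mul_sum]
    exact Finset.sum_le_sum fun j _ => mul_le_mul_of_nonneg_right (hmle j) (abs_nonneg _)
  -- Step 1: basic inequality from minimality
  have key1 : Qn
      ≤ (2/(n:ℝ)) * ∑ t, (y t - ∑ j', x t j' * β₀ j') * (∑ j, x t j * (βhat j - β₀ j))
        + (lam/(n:ℝ)) * (∑ j, υ j * |β₀ j| - ∑ j, υ j * |βhat j|) := by
    have h := hmin β₀
    have hexp : ∀ t : Fin n, (y t - ∑ j, x t j * βhat j)^2
        = (y t - ∑ j', x t j' * β₀ j')^2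
          - 2*((y t - ∑ j', x t j' * β₀ j') * (∑ j, x t j * (βhat j - β₀ j)))
          + (∑ j, x t j * (βhat j - β₀ j))^2 := by
      intro t
      have h1 : ∑ j, x t j * (βhat j - β₀ j)
          = (∑ j, x t j * βhat j) - ∑ j, x t j * β₀ j := by
        rw [← Finset.sum_sub_distrib]; exact Finset.sum_congr rfl fun j _ => by ring
      rw [h1]; ring
    rw [Finset.sum_congr rfl (fun t _ => hexp t)] at h
    rw [Finset.sum_add_distrib, Finset.sum_sub_distrib, ← Finset.mul_sum] at h
    rw [hQdef]
    have e1 : (1/(n:ℝ)) * ((∑ t, (y t - ∑ j', x t j' * β₀ j')^2)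
        - 2 * ∑ t, (y t - ∑ j', x t j' * β₀ j') * (∑ j, x t j * (βhat j - β₀ j))
        + ∑ t, (∑ j, x t j * (βhat j - β₀ j))^2)
        = (1/(n:ℝ)) * (∑ t, (y t - ∑ j', x t j' * β₀ j')^2)
          - (2/(n:ℝ)) * ∑ t, (y t - ∑ j', x t j' * β₀ j') * (∑ j, x t j * (βhat j - β₀ j))
          + (1/(n:ℝ)) * ∑ t, (∑ j, x t j * (βhat j - β₀ j))^2 := by ring
    rw [e1] at h
    have e2 : (lam/(n:ℝ)) * (∑ j, υ j * |β₀ j| - ∑ j, υ j * |βhat j|)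
        = (lam/(n:ℝ)) * ∑ j, υ j * |β₀ j| - (lam/(n:ℝ)) * ∑ j, υ j * |βhat j| := by ring
    rw [e2]
    linarith
  -- Step 2: score bound
  have key2 : (2/(n:ℝ)) * ∑ t, (y t - ∑ j', x t j' * β₀ j') * (∑ j, x t j * (βhat j - β₀ j))
      ≤ (lam/(c*(n:ℝ))) * ∑ j, υ0 j * |βhat j - β₀ j| := by
    have hswap : ∑ t, (y t - ∑ j', x t j' * β₀ j') * (∑ j, x t j * (βhat j - β₀ j))
        = ∑ j, (∑ t, x t j * (y t - ∑ j', x t j' * β₀ j')) * (βhat j - β₀ j) := by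
      have h1 : ∀ t : Fin n, (y t - ∑ j', x t j' * β₀ j') * (∑ j, x t j * (βhat j - β₀ j))
          = ∑ j, (x t j * (y t - ∑ j', x t j' * β₀ j')) * (βhat j - β₀ j) := by
        intro t; rw [Finset.mul_sum]; exact Finset.sum_congr rfl fun j _ => by ring
      rw [Finset.sum_congr rfl (fun t _ => h1 t), Finset.sum_comm]
      exact Finset.sum_congr rfl fun j _ => (Finset.sum_mul _ _ _).symm
    rw [hswap, Finset.mul_sum, Finset.mul_sum]
    apply Finset.sum_le_sum
    intro j _
    have hS := hpen j
    have hυj := hυ0 j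
    have habs : |(2/(n:ℝ)) * (∑ t, x t j * (y t - ∑ j', x t j' * β₀ j')) / υ0 j|
        = |(2/(n:ℝ)) * (∑ t, x t j * (y t - ∑ j', x t j' * β₀ j'))| / υ0 j := by
      rw [abs_div, abs_of_pos hυj]
    rw [habs, mul_comm, ← le_div_iff₀ hc0, div_le_iff₀ hυj] at hS
    have hSb : |(2/(n:ℝ)) * (∑ t, x t j * (y t - ∑ j', x t j' * β₀ j'))|
        ≤ (lam/(c*(n:ℝ))) * υ0 j := by
      calc |(2/(n:ℝ)) * (∑ t, x t j * (y t - ∑ j', x t j' * β₀ j'))|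
          ≤ lam / (n:ℝ) / c * υ0 j := hS
        _ = (lam/(c*(n:ℝ))) * υ0 j := by ring
    calc (2/(n:ℝ)) * ((∑ t, x t j * (y t - ∑ j', x t j' * β₀ j')) * (βhat j - β₀ j))
        ≤ |(2/(n:ℝ)) * (∑ t, x t j * (y t - ∑ j', x t j' * β₀ j'))| * |βhat j - β₀ j| := by
          rw [← abs_mul]
          have : (2/(n:ℝ)) * ((∑ t, x t j * (y t - ∑ j', x t j' * β₀ j')) * (βhat j - β₀ j))
              = (2/(n:ℝ)) * (∑ t, x t j * (y t - ∑ j', x t j' * β₀ j')) * (βhat j - β₀ j) := by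
            ring
          rw [this]; exact le_abs_self _
      _ ≤ (lam/(c*(n:ℝ))) * υ0 j * |βhat j - β₀ j| :=
          mul_le_mul_of_nonneg_right hSb (abs_nonneg _)
      _ = (lam/(c*(n:ℝ))) * (υ0 j * |βhat j - β₀ j|) := by ring
  -- Step 3: penalty split
  have key3 : ∑ j, υ j * |β₀ j| - ∑ j, υ j * |βhat j| ≤ uhat * a - lhat * b := by
    have hs1 : ∑ j, υ j * |β₀ j| = ∑ j ∈ T, υ j * |β₀ j| + ∑ j ∈ Tᶜ, υ j * |β₀ j| :=
      (Finset.sum_add_sum_compl T _).symm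
    have hs2 : ∑ j, υ j * |βhat j| = ∑ j ∈ T, υ j * |βhat j| + ∑ j ∈ Tᶜ, υ j * |βhat j| :=
      (Finset.sum_add_sum_compl T _).symm
    have hbz : ∀ j ∈ Tᶜ, β₀ j = 0 := by
      intro j hj
      simp only [hTdef, Finset.mem_compl, Finset.mem_filter, Finset.mem_univ,
        true_and, not_not] at hj
      exact hj
    have hma : uhat * a = ∑ j ∈ T, uhat * (υ0 j * |βhat j - β₀ j|) := by
      rw [hadef, Finset.mul_sum]
    have hmb : lhat * b = ∑ j ∈ Tᶜ, lhat * (υ0 j * |βhat j - β₀ j|) := by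
      rw [hbdef, Finset.mul_sum]
    have hT : ∑ j ∈ T, υ j * |β₀ j| - ∑ j ∈ T, υ j * |βhat j|
        ≤ ∑ j ∈ T, uhat * (υ0 j * |βhat j - β₀ j|) := by
      rw [← Finset.sum_sub_distrib]
      apply Finset.sum_le_sum
      intro j _
      have hυpos : 0 < υ j := lt_of_lt_of_le (mul_pos hlpos (hυ0 j)) (hload j).1
      have h1 : |β₀ j| - |βhat j| ≤ |βhat j - β₀ j| := by
        have h0 := abs_sub_abs_le_abs_sub (β₀ j) (βhat j)
        have h2 : |β₀ j - βhat j| = |βhat j - β₀ j| := abs_sub_comm _ _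
        linarith
      calc υ j * |β₀ j| - υ j * |βhat j| = υ j * (|β₀ j| - |βhat j|) := by ring
        _ ≤ υ j * |βhat j - β₀ j| := mul_le_mul_of_nonneg_left h1 hυpos.le
        _ ≤ uhat * υ0 j * |βhat j - β₀ j| :=
            mul_le_mul_of_nonneg_right (hload j).2 (abs_nonneg _)
        _ = uhat * (υ0 j * |βhat j - β₀ j|) := by ring
    have hTc0 : ∑ j ∈ Tᶜ, υ j * |β₀ j| = 0 :=
      Finset.sum_eq_zero fun j hj => by rw [hbz j hj]; simp
    have hTc1 : ∑ j ∈ Tᶜ, lhat * (υ0 j * |βhat j - β₀ j|) ≤ ∑ j ∈ Tᶜ, υ j * |βhat j| := by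
      apply Finset.sum_le_sum
      intro j hj
      rw [hbz j hj, sub_zero]
      calc lhat * (υ0 j * |βhat j|) = lhat * υ0 j * |βhat j| := by ring
        _ ≤ υ j * |βhat j| := mul_le_mul_of_nonneg_right (hload j).1 (abs_nonneg _)
    rw [hs1, hs2, hma, hmb, hTc0]
    linarith
  -- Combine: key5
  have habsum : ∑ j, υ0 j * |βhat j - β₀ j| = a + b := by
    rw [hadef, hbdef]; exact (Finset.sum_add_sum_compl T _).symm
  have key5 : Qn ≤ (lam/(n:ℝ)) * ((uhat + 1/c) * a - (lhat - 1/c) * b) := by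
    have h2 := key2
    rw [habsum] at h2
    have h3 : (lam/(n:ℝ)) * (∑ j, υ j * |β₀ j| - ∑ j, υ j * |βhat j|)
        ≤ (lam/(n:ℝ)) * (uhat * a - lhat * b) :=
      mul_le_mul_of_nonneg_left key3 (div_nonneg hlam0 hnpos.le)
    have e : (lam/(c*(n:ℝ))) * (a + b) + (lam/(n:ℝ)) * (uhat * a - lhat * b)
        = (lam/(n:ℝ)) * ((uhat + 1/c) * a - (lhat - 1/c) * b) := by
      field_simp
      ring
    linarith
  -- lam = 0 case
  rcases eq_or_lt_of_le hlam0 with hlamz | hlampos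
  · have hQz : Qn ≤ 0 := by
      rw [← hlamz] at key5
      simpa using key5
    have : Real.sqrt Qn = 0 := Real.sqrt_eq_zero'.mpr hQz
    rw [this, ← hlamz]
    norm_num
  -- lam > 0 case: cone condition
  have hlc : 0 < lhat * c - 1 := by
    have : 1 / c * c = 1 := by field_simp
    nlinarith [hl]
  have hcone0 : (lhat - 1/c) * b ≤ (uhat + 1/c) * a := by
    have hln : 0 < lam / (n:ℝ) := div_pos hlampos hnpos
    nlinarith [key5, hQ0]
  have hcone : B ≤ ((uhat * c + 1) / (lhat * c - 1)) * (M / m) * A := by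
    have h1 : (lhat * c - 1) * (m * B) ≤ (uhat * c + 1) * (M * A) := by
      have h2 : (lhat * c - 1) * (m * B) ≤ (lhat * c - 1) * b :=
        mul_le_mul_of_nonneg_left hbB hlc.le
      have h3 : (lhat * c - 1) * b = c * ((lhat - 1/c) * b) := by field_simp
      have h4 : c * ((lhat - 1/c) * b) ≤ c * ((uhat + 1/c) * a) :=
        mul_le_mul_of_nonneg_left hcone0 hc0.le
      have h5 : c * ((uhat + 1/c) * a) = (uhat * c + 1) * a := by field_simp
      have h6 : (uhat * c + 1) * a ≤ (uhat * c + 1) * (M * A) := by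
        apply mul_le_mul_of_nonneg_left haA
        nlinarith
      linarith
    rw [show ((uhat * c + 1) / (lhat * c - 1)) * (M / m) * A
        = ((uhat * c + 1) * (M * A)) / ((lhat * c - 1) * m) from by field_simp]
    rw [le_div_iff₀ (by positivity)]
    nlinarith [h1]
  -- restricted eigenvalue
  have hre := hRE (fun j => βhat j - β₀ j) (by simpa using hcone)
  -- Cauchy–Schwarz
  have hcs : A^2 ≤ (T.card : ℝ) * ∑ j, (βhat j - β₀ j)^2 := by
    have h1 := Finset.sum_mul_sq_le_sq_mul_sq T (fun _ => (1:ℝ)) (fun j => |βhat j - β₀ j|)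
    simp only [one_mul, one_pow, sq_abs] at h1
    have h2 : ∑ j ∈ T, (βhat j - β₀ j)^2 ≤ ∑ j, (βhat j - β₀ j)^2 :=
      Finset.sum_le_sum_of_subset_of_nonneg (Finset.subset_univ T)
        (fun j _ _ => sq_nonneg _)
    have h3 : (∑ _j ∈ T, (1:ℝ)) = (T.card : ℝ) := by simp
    rw [hAdef]
    calc (∑ j ∈ T, |βhat j - β₀ j|)^2 ≤ (∑ _j ∈ T, (1:ℝ)) * ∑ j ∈ T, (βhat j - β₀ j)^2 := h1
      _ = (T.card : ℝ) * ∑ j ∈ T, (βhat j - β₀ j)^2 := by rw [h3]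
      _ ≤ (T.card : ℝ) * ∑ j, (βhat j - β₀ j)^2 := by
          apply mul_le_mul_of_nonneg_left h2 (by positivity)
  have hAbound : A ≤ Real.sqrt (T.card) * Real.sqrt Qn / κ := by
    have hδsq : ∑ j, (βhat j - β₀ j)^2 ≤ Qn / κ^2 := by
      rw [le_div_iff₀ (by positivity)]
      nlinarith [hre]
    have h1 : A^2 ≤ (T.card : ℝ) * (Qn / κ^2) := by
      calc A^2 ≤ (T.card : ℝ) * ∑ j, (βhat j - β₀ j)^2 := hcs
        _ ≤ (T.card : ℝ) * (Qn / κ^2) :=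
            mul_le_mul_of_nonneg_left hδsq (by positivity)
    have h2 : A = Real.sqrt (A^2) := (Real.sqrt_sq hA0).symm
    rw [h2]
    calc Real.sqrt (A^2) ≤ Real.sqrt ((T.card : ℝ) * (Qn / κ^2)) := Real.sqrt_le_sqrt h1
      _ = Real.sqrt (T.card) * Real.sqrt Qn / κ := by
          rw [show ((T.card : ℝ) * (Qn / κ^2))
              = (Real.sqrt (T.card) * Real.sqrt Qn / κ)^2 from by
            rw [div_pow, mul_pow, Real.sq_sqrt (Nat.cast_nonneg _), Real.sq_sqrt hQ0]
            ring
          , Real.sqrt_sq (div_nonneg (mul_nonneg (Real.sqrt_nonneg _) (Real.sqrt_nonneg _)) hκ.le)]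
  -- final chain
  have hC0 : 0 ≤ (uhat + 1/c) * (lam * M * Real.sqrt (T.card)) / ((n:ℝ) * κ) := by
    positivity
  have hq := Real.sqrt_nonneg Qn
  have hQsq : Real.sqrt Qn ^ 2 = Qn := Real.sq_sqrt hQ0
  have key6 : Qn ≤ (lam/(n:ℝ)) * ((uhat + 1/c) * (M * A)) := by
    have h1 : Qn ≤ (lam/(n:ℝ)) * ((uhat + 1/c) * a) := by
      have hb' : 0 ≤ (lhat - 1/c) * b := by
        apply mul_nonneg _ hb0
        have : 1/c < lhat := hl
        linarith
      have := mul_le_mul_of_nonneg_left (show (uhat + 1/c) * a - (lhat - 1/c) * b ≤ (uhat + 1/c) * a by linarith) (div_nonneg hlam0 hnpos.le)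
      linarith [key5]
    have h2 : (lam/(n:ℝ)) * ((uhat + 1/c) * a) ≤ (lam/(n:ℝ)) * ((uhat + 1/c) * (M * A)) := by
      apply mul_le_mul_of_nonneg_left _ (div_nonneg hlam0 hnpos.le)
      apply mul_le_mul_of_nonneg_left haA
      positivity
    linarith
  have key7 : Real.sqrt Qn ^ 2 ≤
      ((uhat + 1/c) * (lam * M * Real.sqrt (T.card)) / ((n:ℝ) * κ)) * Real.sqrt Qn := by
    rw [hQsq]
    calc Qn ≤ (lam/(n:ℝ)) * ((uhat + 1/c) * (M * A)) := key6
      _ ≤ (lam/(n:ℝ)) * ((uhat + 1/c) * (M * (Real.sqrt (T.card) * Real.sqrt Qn / κ))) := by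
          apply mul_le_mul_of_nonneg_left _ (div_nonneg hlam0 hnpos.le)
          apply mul_le_mul_of_nonneg_left _ (by positivity)
          exact mul_le_mul_of_nonneg_left hAbound hM0.le
      _ = ((uhat + 1/c) * (lam * M * Real.sqrt (T.card)) / ((n:ℝ) * κ)) * Real.sqrt Qn := by
          field_simp
  rcases eq_or_lt_of_le hq with hq0 | hqpos
  · rw [← hq0]; exact hC0
  · rw [sq] at key7
    exact le_of_mul_le_mul_right key7 hqpos
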